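/- arXiv:1308.5185 — 5 statements merged into one kernel-verified Lean document; each statement's English description precedes it below -/
import Mathlib

section
/- Assume char k ≠ 2. Let σ ∈ Gal(K/k) and V := K_σ ⊕ K_σ. Then Aut(V), i.e. the group of K ⊗_k K-module automorphisms of V modulo the subgroup of automorphisms of the form v ↦ a·v·b with a, b ∈ K^×, is isomorphic as a group to PGL₂(K) = GL₂(K)/Z(GL₂(K)). -/
open TensorProduct

noncomputable section

variable (k K : Type*) [Field k] [Field K] [Algebra k K]

/-- The two-sided vector space `K_σ`: the underlying set is `K`, and the `K ⊗[k] K`-module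
structure is given by `(a ⊗ b) • x = a * x * σ b`. -/
def Kst (σ : K ≃ₐ[k] K) : Type _ := K

instance (σ : K ≃ₐ[k] K) : AddCommGroup (Kst k K σ) := inferInstanceAs (AddCommGroup K)

instance (σ : K ≃ₐ[k] K) : One (Kst k K σ) := inferInstanceAs (One K)

instance (σ : K ≃ₐ[k] K) : Module (K ⊗[k] K) (Kst k K σ) :=
  Module.compHom K (Algebra.TensorProduct.productMap (AlgHom.id k K) σ.toAlgHom).toRingHom

/-- The subgroup of "inner" automorphisms of a two-sided vector space `V`, i.e. those of the
form `v ↦ a • v • b` for nonzero `a, b ∈ K`. -/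
def innerAut (V : Type*) [AddCommGroup V] [Module (K ⊗[k] K) V] :
    Subgroup (V ≃ₗ[K ⊗[k] K] V) where
  carrier := {f | ∃ a b : Kˣ, ∀ v : V, f v = (((a : K) ⊗ₜ[k] (b : K)) : K ⊗[k] K) • v}
  one_mem' := ⟨1, 1, fun v => by
    show v = _
    rw [Units.val_one, ← Algebra.TensorProduct.one_def, one_smul]⟩
  mul_mem' := by
    rintro f g ⟨a, b, hf⟩ ⟨c, d, hg⟩
    refine ⟨c * a, d * b, fun v => ?_⟩
    show f (g v) = _
    rw [hg, map_smul, hf, smul_smul, Algebra.TensorProduct.tmul_mul_tmul,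
      Units.val_mul, Units.val_mul]
  inv_mem' := by
    rintro f ⟨a, b, hf⟩
    refine ⟨a⁻¹, b⁻¹, fun v => ?_⟩
    apply f.injective
    show f (f.symm v) = _
    rw [f.apply_symm_apply, hf, smul_smul, Algebra.TensorProduct.tmul_mul_tmul]
    rw [Units.val_inv_eq_inv_val, Units.val_inv_eq_inv_val, mul_inv_cancel₀ a.ne_zero,
      mul_inv_cancel₀ b.ne_zero, ← Algebra.TensorProduct.one_def, one_smul]

instance (V : Type*) [AddCommGroup V] [Module (K ⊗[k] K) V] : (innerAut k K V).Normal := by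
  constructor
  rintro f ⟨a, b, hf⟩ g
  refine ⟨a, b, fun v => ?_⟩
  show g (f (g.symm v)) = _
  rw [hf, map_smul, g.apply_symm_apply]

variable [PerfectField k] [FiniteDimensional k K]
namespace AutVPGL2

variable {k K : Type*} [Field k] [Field K] [Algebra k K] (σ : K ≃ₐ[k] K)

abbrev φ : K ⊗[k] K →+* K :=
  (Algebra.TensorProduct.productMap (AlgHom.id k K) σ.toAlgHom).toRingHom

lemma kst_smul (r : K ⊗[k] K) (x : Kst k K σ) : r • x = (φ σ r * (show K from x) : K) := rfl

lemma v_smul (r : K ⊗[k] K) (v : Kst k K σ × Kst k K σ) :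
    r • v = (φ σ r • (show K × K from v) : K × K) := rfl

lemma tmul_smul_v (a b : K) (v : Kst k K σ × Kst k K σ) :
    ((a ⊗ₜ[k] b : K ⊗[k] K) • v : _) = ((a * σ b) • (show K × K from v) : K × K) := by
  rw [v_smul]; simp; rfl

lemma k_smul_v (c : K) (v : Kst k K σ × Kst k K σ) :
    ((c ⊗ₜ[k] (1 : K) : K ⊗[k] K) • v : _) = (c • (show K × K from v) : K × K) := by
  rw [tmul_smul_v]; simp; rfl

lemma mul_apply' {R M : Type*} [Semiring R] [AddCommMonoid M] [Module R M]
    (f g : M ≃ₗ[R] M) (x : M) : (f * g) x = f (g x) := rfl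

/-- Forgetting to the left `K`-module structure. -/
def E1 : ((Kst k K σ × Kst k K σ) ≃ₗ[K ⊗[k] K] (Kst k K σ × Kst k K σ)) ≃*
    ((K × K) ≃ₗ[K] (K × K)) where
  toFun f :=
    { toFun := fun v => f v
      map_add' := fun x y => f.map_add x y
      map_smul' := fun c x => by
        rw [← k_smul_v σ c x]
        show f ((c ⊗ₜ[k] (1 : K) : K ⊗[k] K) • (show Kst k K σ × Kst k K σ from x)) = _
        rw [map_smul, k_smul_v]
        rfl
      invFun := fun v => f.symm v
      left_inv := f.left_inv
      right_inv := f.right_inv }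
  invFun g :=
    { toFun := fun v => g (show K × K from v)
      map_add' := fun x y => g.map_add x y
      map_smul' := fun r v => by
        rw [v_smul σ r v]
        show g ((φ σ) r • (show K × K from v)) = _
        rw [g.map_smul]
        exact (v_smul σ r (g (show K × K from v))).symm
      invFun := fun v => g.symm (show K × K from v)
      left_inv := g.left_inv
      right_inv := g.right_inv }
  left_inv f := LinearEquiv.ext fun v => rfl
  right_inv g := LinearEquiv.ext fun v => rfl
  map_mul' f g := LinearEquiv.ext fun v => rfl

/-- Conjugation of automorphism groups by a linear equivalence. -/
def conjAut {R M N : Type*} [Semiring R] [AddCommMonoid M] [AddCommMonoid N]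
    [Module R M] [Module R N] (e : M ≃ₗ[R] N) : (M ≃ₗ[R] M) ≃* (N ≃ₗ[R] N) where
  toFun f := (e.symm.trans f).trans e
  invFun g := (e.trans g).trans e.symm
  left_inv f := LinearEquiv.ext fun v => by simp
  right_inv g := LinearEquiv.ext fun v => by simp
  map_mul' f g := LinearEquiv.ext fun v => by
    simp [mul_apply', LinearEquiv.trans_apply]

/-- `GL₂(K)` as the group of linear automorphisms of `Fin 2 → K`. -/
def glEquiv : Matrix.GeneralLinearGroup (Fin 2) K ≃* ((Fin 2 → K) ≃ₗ[K] (Fin 2 → K)) :=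
  Matrix.GeneralLinearGroup.toLin.trans (LinearMap.GeneralLinearGroup.generalLinearEquiv K _)

/-- The full equivalence between `Aut V` and `GL₂(K)`. -/
def E : ((Kst k K σ × Kst k K σ) ≃ₗ[K ⊗[k] K] (Kst k K σ × Kst k K σ)) ≃*
    Matrix.GeneralLinearGroup (Fin 2) K :=
  (E1 σ).trans (((conjAut (LinearEquiv.finTwoArrow K K).symm)).trans (glEquiv (K := K)).symm)

lemma E_symm_apply (A : Matrix.GeneralLinearGroup (Fin 2) K) (v : Kst k K σ × Kst k K σ) :
    (E σ).symm A v = (show K × K from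
      LinearEquiv.finTwoArrow K K ((A : Matrix (Fin 2) (Fin 2) K).mulVec
        ((LinearEquiv.finTwoArrow K K).symm (show K × K from v)))) := rfl

end AutVPGL2
namespace AutVPGL2

variable {k K : Type*} [Field k] [Field K] [Algebra k K] (σ : K ≃ₐ[k] K)

lemma matrix_eq_of_mem_center (A : Matrix.GeneralLinearGroup (Fin 2) K)
    (hA : A ∈ Subgroup.center (Matrix.GeneralLinearGroup (Fin 2) K)) :
    (A : Matrix (Fin 2) (Fin 2) K) =
      (A : Matrix (Fin 2) (Fin 2) K) 0 0 • (1 : Matrix (Fin 2) (Fin 2) K) := by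
  have h := Subgroup.mem_center_iff.mp hA
  set M := (A : Matrix (Fin 2) (Fin 2) K) with hM
  have e1 : (1 : Matrix (Fin 2) (Fin 2) K) * !![(1:K),1;0,1] = !![(1:K),1;0,1] := one_mul _
  let T1 : Matrix.GeneralLinearGroup (Fin 2) K :=
    ⟨!![(1:K),1;0,1], !![(1:K),-1;0,1],
      by ext i j; fin_cases i <;> fin_cases j <;>
        simp [Matrix.mul_apply, Fin.sum_univ_two, Matrix.one_apply],
      by ext i j; fin_cases i <;> fin_cases j <;>
        simp [Matrix.mul_apply, Fin.sum_univ_two, Matrix.one_apply]⟩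
  let T2 : Matrix.GeneralLinearGroup (Fin 2) K :=
    ⟨!![(1:K),0;1,1], !![(1:K),0;-1,1],
      by ext i j; fin_cases i <;> fin_cases j <;>
        simp [Matrix.mul_apply, Fin.sum_univ_two, Matrix.one_apply],
      by ext i j; fin_cases i <;> fin_cases j <;>
        simp [Matrix.mul_apply, Fin.sum_univ_two, Matrix.one_apply]⟩
  have h1 : !![(1:K),1;0,1] * M = M * !![(1:K),1;0,1] := congrArg Units.val (h T1)
  have h2 : !![(1:K),0;1,1] * M = M * !![(1:K),0;1,1] := congrArg Units.val (h T2)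
  have e10 : M 1 0 = 0 := by
    have := congrFun (congrFun h1 0) 0
    simp [Matrix.mul_apply, Fin.sum_univ_two] at this
    exact this
  have e11 : M 1 1 = M 0 0 := by
    have := congrFun (congrFun h1 0) 1
    simp [Matrix.mul_apply, Fin.sum_univ_two] at this
    linear_combination this
  have e01 : M 0 1 = 0 := by
    have := congrFun (congrFun h2 0) 0
    simp [Matrix.mul_apply, Fin.sum_univ_two] at this
    exact this
  ext i j
  fin_cases i <;> fin_cases j <;>
    simp [Matrix.one_apply, e10, e11, e01]

end AutVPGL2
namespace AutVPGL2

variable {k K : Type*} [Field k] [Field K] [Algebra k K] (σ : K ≃ₐ[k] K)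

lemma entry_ne_zero (A : Matrix.GeneralLinearGroup (Fin 2) K)
    (hA : A ∈ Subgroup.center (Matrix.GeneralLinearGroup (Fin 2) K)) :
    (A : Matrix (Fin 2) (Fin 2) K) 0 0 ≠ 0 := by
  intro h0
  have hm := matrix_eq_of_mem_center A hA
  have h1 : (A : Matrix (Fin 2) (Fin 2) K) * (↑A⁻¹ : Matrix (Fin 2) (Fin 2) K) = 1 :=
    A.mul_inv
  rw [hm, h0, zero_smul, Matrix.zero_mul] at h1
  have := congrFun (congrFun h1 0) 0
  simp [Matrix.one_apply] at this

lemma map_innerAut :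
    (innerAut k K (Kst k K σ × Kst k K σ)).map ((E σ) : _ →* _) =
      Subgroup.center (Matrix.GeneralLinearGroup (Fin 2) K) := by
  apply le_antisymm
  · rintro x hx
    obtain ⟨f, ⟨a, b, hf⟩, rfl⟩ := hx
    refine Subgroup.mem_center_iff.mpr fun g => ?_
    apply (E σ).symm.injective
    simp only [map_mul, MulEquiv.coe_toMonoidHom, MonoidHom.coe_coe, MulEquiv.symm_apply_apply]
    refine LinearEquiv.ext fun v => ?_
    rw [mul_apply', mul_apply', hf, map_smul, hf]
  · intro A hA
    have hm := matrix_eq_of_mem_center A hA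
    have hc := entry_ne_zero A hA
    refine Subgroup.mem_map.mpr ⟨(E σ).symm A,
      ⟨Units.mk0 _ hc, 1, fun v => ?_⟩, (E σ).apply_symm_apply A⟩
    have hmv : ∀ w : Fin 2 → K, (A : Matrix (Fin 2) (Fin 2) K).mulVec w =
        (A : Matrix (Fin 2) (Fin 2) K) 0 0 • w := by
      intro w
      conv_lhs => rw [hm]
      rw [Matrix.smul_mulVec, Matrix.one_mulVec]
    rw [E_symm_apply, tmul_smul_v, hmv]
    simp only [map_smul, LinearEquiv.apply_symm_apply, Units.val_mk0, Units.val_one, map_one,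
      mul_one]
    exact congrArg (fun w : K × K => (A : Matrix (Fin 2) (Fin 2) K) 0 0 • w)
      ((LinearEquiv.finTwoArrow K K).apply_symm_apply (show K × K from v))

end AutVPGL2

/-- Assume `char k ≠ 2`.  For `σ ∈ Gal(K/k)` and `V := K_σ ⊕ K_σ`, the group
`Aut V` of `K ⊗[k] K`-module automorphisms of `V` modulo those of the form `v ↦ a • v • b`
(`a, b ∈ Kˣ`) is isomorphic to `PGL₂(K) = GL₂(K)/Z(GL₂(K))`. -/
theorem autV_eq_pgl2 (hchar : ringChar k ≠ 2) (σ : K ≃ₐ[k] K) :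
    Nonempty
      ((((Kst k K σ × Kst k K σ) ≃ₗ[K ⊗[k] K] (Kst k K σ × Kst k K σ)) ⧸
          innerAut k K (Kst k K σ × Kst k K σ)) ≃*
        (Matrix.GeneralLinearGroup (Fin 2) K ⧸
          Subgroup.center (Matrix.GeneralLinearGroup (Fin 2) K))) := by
  exact ⟨QuotientGroup.congr _ _ (AutVPGL2.E σ) (AutVPGL2.map_innerAut σ)⟩
end
end

section
/- Assume char k ≠ 2. Let σ, τ ∈ Gal(K/k) with σ ≠ τ, and V := K_σ ⊕ K_τ. Then Aut(V) is isomorphic as a group to (K^× × K^×)/N, where N is the subgroup {(a σ(b), a τ(b)) : a, b ∈ K^×} of K^× × K^×. -/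
open TensorProduct

noncomputable section

variable (k K : Type*) [Field k] [Field K] [Algebra k K]

/-- The subgroup `N = {(a σ(b), a τ(b)) : a, b ∈ Kˣ}` of `Kˣ × Kˣ`. -/
def NN (σ τ : K ≃ₐ[k] K) : Subgroup (Kˣ × Kˣ) where
  carrier := {p | ∃ a b : Kˣ, ((p.1 : K) = (a : K) * σ (b : K)) ∧ ((p.2 : K) = (a : K) * τ (b : K))}
  one_mem' := ⟨1, 1, by simp⟩
  mul_mem' := by
    rintro p q ⟨a, b, h1, h2⟩ ⟨c, d, h3, h4⟩
    refine ⟨a * c, b * d, ?_, ?_⟩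
    · rw [Prod.fst_mul, Units.val_mul, h1, h3, Units.val_mul, Units.val_mul, map_mul]; ring
    · rw [Prod.snd_mul, Units.val_mul, h2, h4, Units.val_mul, Units.val_mul, map_mul]; ring
  inv_mem' := by
    rintro p ⟨a, b, h1, h2⟩
    refine ⟨a⁻¹, b⁻¹, ?_, ?_⟩
    · rw [Prod.fst_inv, Units.val_inv_eq_inv_val, h1, Units.val_inv_eq_inv_val,
        Units.val_inv_eq_inv_val, map_inv₀, mul_inv]
    · rw [Prod.snd_inv, Units.val_inv_eq_inv_val, h2, Units.val_inv_eq_inv_val,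
        Units.val_inv_eq_inv_val, map_inv₀, mul_inv]

instance (σ τ : K ≃ₐ[k] K) : (NN k K σ τ).Normal := Subgroup.normal_of_comm _

def toKst (σ : K ≃ₐ[k] K) : K → Kst k K σ := id
def fromKst (σ : K ≃ₐ[k] K) : Kst k K σ → K := id

variable {k K}

lemma Kst_smul_def (σ : K ≃ₐ[k] K) (a b : K) (v : Kst k K σ) :
    (a ⊗ₜ[k] b : K ⊗[k] K) • v = toKst k K σ (a * σ b * fromKst k K σ v) := rfl

lemma toKst_inj (σ : K ≃ₐ[k] K) {x y : K} (h : x = y) : toKst k K σ x = toKst k K σ y :=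
  congrArg _ h

lemma toKst_fromKst (σ : K ≃ₐ[k] K) (v : Kst k K σ) : toKst k K σ (fromKst k K σ v) = v := rfl

lemma Kst_one (σ : K ≃ₐ[k] K) : (1 : Kst k K σ) = toKst k K σ 1 := rfl
lemma Kst_zero (σ : K ≃ₐ[k] K) : (0 : Kst k K σ) = toKst k K σ 0 := rfl
lemma fromKst_zero (σ : K ≃ₐ[k] K) : fromKst k K σ 0 = 0 := rfl
lemma fromKst_toKst (σ : K ≃ₐ[k] K) (x : K) : fromKst k K σ (toKst k K σ x) = x := rfl

variable (k K)

def tL : Kˣ →* (K ⊗[k] K)ˣ :=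
  Units.map (Algebra.TensorProduct.includeLeft : K →ₐ[k] K ⊗[k] K).toRingHom.toMonoidHom

lemma tL_val (c : Kˣ) : ((tL k K c : (K ⊗[k] K)ˣ) : K ⊗[k] K) = (c : K) ⊗ₜ[k] (1 : K) := rfl

def Psi (σ τ : K ≃ₐ[k] K) :
    Kˣ × Kˣ →* ((Kst k K σ × Kst k K τ) ≃ₗ[K ⊗[k] K] (Kst k K σ × Kst k K τ)) where
  toFun p := (LinearEquiv.smulOfUnit (tL k K p.1)).prodCongr (LinearEquiv.smulOfUnit (tL k K p.2))
  map_one' := by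
    apply LinearEquiv.ext
    rintro ⟨x, y⟩
    have : ∀ (σ' : K ≃ₐ[k] K) (v : Kst k K σ'),
        (((1:Kˣ):K) ⊗ₜ[k] (1:K) : K ⊗[k] K) • v = v := by
      intro σ' v
      rw [Kst_smul_def]
      rw [← toKst_fromKst σ' v]
      exact toKst_inj σ' (by simp [fromKst_toKst])
    exact Prod.ext (this σ x) (this τ y)
  map_mul' p q := by
    apply LinearEquiv.ext
    rintro ⟨x, y⟩
    have : ∀ (σ' : K ≃ₐ[k] K) (c d : Kˣ) (v : Kst k K σ'),
        (((c*d : Kˣ):K) ⊗ₜ[k] (1:K) : K ⊗[k] K) • v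
          = ((c:K) ⊗ₜ[k] (1:K) : K ⊗[k] K) • (((d:K) ⊗ₜ[k] (1:K) : K ⊗[k] K) • v) := by
      intro σ' c d v
      rw [Kst_smul_def, Kst_smul_def, Kst_smul_def, fromKst_toKst]
      exact toKst_inj σ' (by push_cast; simp only [map_one]; ring)
    exact Prod.ext (this σ p.1 q.1 x) (this τ p.2 q.2 y)

lemma Psi_apply (σ τ : K ≃ₐ[k] K) (p : Kˣ × Kˣ) (v : Kst k K σ × Kst k K τ) :
    Psi k K σ τ p v = (((p.1 : K) ⊗ₜ[k] (1:K) : K ⊗[k] K) • v.1,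
      ((p.2 : K) ⊗ₜ[k] (1:K) : K ⊗[k] K) • v.2) := rfl

variable {k K}

lemma prod_smul {σ τ : K ≃ₐ[k] K} (r : K ⊗[k] K) (v : Kst k K σ × Kst k K τ) :
    r • v = (r • v.1, r • v.2) := rfl

lemma fromKst_congr (σ : K ≃ₐ[k] K) {x y : K} (h : toKst k K σ x = toKst k K σ y) : x = y :=
  congrArg (fromKst k K σ) h

lemma Psi_injective (σ τ : K ≃ₐ[k] K) : Function.Injective (Psi k K σ τ) := by
  intro p q h
  have h1 := congrArg (fun g : (Kst k K σ × Kst k K τ) ≃ₗ[K ⊗[k] K] (Kst k K σ × Kst k K τ) =>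
    g (toKst k K σ 1, 0)) h
  have h2 := congrArg (fun g : (Kst k K σ × Kst k K τ) ≃ₗ[K ⊗[k] K] (Kst k K σ × Kst k K τ) =>
    g (0, toKst k K τ 1)) h
  simp only [Psi_apply] at h1 h2
  have e1 : (p.1 : K) * σ 1 * 1 = (q.1 : K) * σ 1 * 1 :=
    fromKst_congr σ (congrArg Prod.fst h1)
  have e2 : (p.2 : K) * τ 1 * 1 = (q.2 : K) * τ 1 * 1 :=
    fromKst_congr τ (congrArg Prod.snd h2)
  simp only [map_one, mul_one] at e1 e2
  exact Prod.ext (Units.ext e1) (Units.ext e2)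

lemma Kst_smul_toKst (σ : K ≃ₐ[k] K) (a b x : K) :
    (a ⊗ₜ[k] b : K ⊗[k] K) • toKst k K σ x = toKst k K σ (a * σ b * x) := rfl

lemma Psi_surjective (σ τ : K ≃ₐ[k] K) (hστ : σ ≠ τ) :
    Function.Surjective (Psi k K σ τ) := by
  obtain ⟨b0, hb0⟩ : ∃ b0 : K, σ b0 ≠ τ b0 := by
    by_contra h
    push_neg at h
    exact hστ (AlgEquiv.ext h)
  intro f
  set e1 : Kst k K σ × Kst k K τ := (toKst k K σ 1, 0) with he1
  set e2 : Kst k K σ × Kst k K τ := (0, toKst k K τ 1) with he2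
  have smul_e1 : ∀ a b : K, ((a ⊗ₜ[k] b) : K ⊗[k] K) • e1 = (toKst k K σ (a * σ b), 0) := by
    intro a b
    refine Prod.ext ?_ ?_
    · show toKst k K σ (a * σ b * fromKst k K σ (toKst k K σ 1)) = toKst k K σ (a * σ b)
      exact toKst_inj σ (by rw [fromKst_toKst, mul_one])
    · exact smul_zero _
  have smul_e2 : ∀ a b : K, ((a ⊗ₜ[k] b) : K ⊗[k] K) • e2 = (0, toKst k K τ (a * τ b)) := by
    intro a b
    refine Prod.ext ?_ ?_
    · exact smul_zero _
    · show toKst k K τ (a * τ b * fromKst k K τ (toKst k K τ 1)) = toKst k K τ (a * τ b)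
      exact toKst_inj τ (by rw [fromKst_toKst, mul_one])
  have hx : ∀ x : K, f (toKst k K σ x, 0) = ((x ⊗ₜ[k] (1 : K)) : K ⊗[k] K) • f e1 := by
    intro x
    rw [← map_smul]
    congr 1
    rw [smul_e1]
    exact Prod.ext (toKst_inj σ (by rw [map_one, mul_one])).symm rfl
  have hy : ∀ y : K, f (0, toKst k K τ y) = ((y ⊗ₜ[k] (1 : K)) : K ⊗[k] K) • f e2 := by
    intro y
    rw [← map_smul]
    congr 1
    rw [smul_e2]
    exact Prod.ext rfl (toKst_inj τ (by rw [map_one, mul_one])).symm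
  -- second component of f e1 vanishes
  have hc2 : (f e1).2 = 0 := by
    have key : f ((((1:K) ⊗ₜ[k] b0) : K ⊗[k] K) • e1) = (((1:K) ⊗ₜ[k] b0) : K ⊗[k] K) • f e1 :=
      map_smul f _ _
    rw [smul_e1, one_mul, hx (σ b0)] at key
    have h2 : σ b0 * τ 1 * fromKst k K τ (f e1).2 = 1 * τ b0 * fromKst k K τ (f e1).2 := by
      have := congrArg Prod.snd key
      rw [prod_smul, prod_smul] at this
      rw [show ((f e1).2 : Kst k K τ) = toKst k K τ (fromKst k K τ (f e1).2) from rfl,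
        Kst_smul_toKst, Kst_smul_toKst] at this
      exact fromKst_congr τ this
    simp only [map_one, mul_one, one_mul] at h2
    have hzero : fromKst k K τ (f e1).2 = 0 := by
      by_contra hne
      exact hb0 (mul_right_cancel₀ hne h2)
    rw [← toKst_fromKst τ (f e1).2, hzero, ← Kst_zero]
  have hd1 : (f e2).1 = 0 := by
    have key : f ((((1:K) ⊗ₜ[k] b0) : K ⊗[k] K) • e2) = (((1:K) ⊗ₜ[k] b0) : K ⊗[k] K) • f e2 :=
      map_smul f _ _
    rw [smul_e2, one_mul, hy (τ b0)] at key
    have h2 : τ b0 * σ 1 * fromKst k K σ (f e2).1 = 1 * σ b0 * fromKst k K σ (f e2).1 := by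
      have := congrArg Prod.fst key
      rw [prod_smul, prod_smul] at this
      rw [show ((f e2).1 : Kst k K σ) = toKst k K σ (fromKst k K σ (f e2).1) from rfl,
        Kst_smul_toKst, Kst_smul_toKst] at this
      exact fromKst_congr σ this
    simp only [map_one, mul_one, one_mul] at h2
    have hzero : fromKst k K σ (f e2).1 = 0 := by
      by_contra hne
      exact hb0 (mul_right_cancel₀ hne h2).symm
    rw [← toKst_fromKst σ (f e2).1, hzero, ← Kst_zero]
  set c : K := fromKst k K σ (f e1).1 with hc
  set d : K := fromKst k K τ (f e2).2 with hd
  have hcne : c ≠ 0 := by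
    intro h0
    have hfe1 : f e1 = 0 := by
      refine Prod.ext ?_ (by rw [hc2]; rfl)
      show (f e1).1 = 0
      rw [← toKst_fromKst σ (f e1).1, ← hc, h0, ← Kst_zero]
    have he10 : e1 = 0 := f.injective (by rw [hfe1, map_zero])
    have h1 : toKst k K σ 1 = (0 : Kst k K σ) := congrArg Prod.fst he10
    rw [Kst_zero] at h1
    exact one_ne_zero (fromKst_congr σ h1)
  have hdne : d ≠ 0 := by
    intro h0
    have hfe2 : f e2 = 0 := by
      refine Prod.ext (by rw [hd1]; rfl) ?_
      show (f e2).2 = 0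
      rw [← toKst_fromKst τ (f e2).2, ← hd, h0, ← Kst_zero]
    have he20 : e2 = 0 := f.injective (by rw [hfe2, map_zero])
    have h1 : toKst k K τ 1 = (0 : Kst k K τ) := congrArg Prod.snd he20
    rw [Kst_zero] at h1
    exact one_ne_zero (fromKst_congr τ h1)
  refine ⟨(Units.mk0 c hcne, Units.mk0 d hdne), ?_⟩
  apply LinearEquiv.ext
  rintro ⟨x, y⟩
  have hfx : f (x, (0 : Kst k K τ)) = (toKst k K σ (fromKst k K σ x * σ 1 * c), 0) := by
    refine (hx (fromKst k K σ x)).trans ?_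
    rw [prod_smul]
    refine Prod.ext ?_ ?_
    · show (fromKst k K σ x ⊗ₜ[k] (1:K) : K ⊗[k] K) • (f e1).1 = _
      rw [show ((f e1).1 : Kst k K σ) = toKst k K σ c from rfl, Kst_smul_toKst]
    · show (fromKst k K σ x ⊗ₜ[k] (1:K) : K ⊗[k] K) • (f e1).2 = (0 : Kst k K τ)
      rw [hc2]
      exact smul_zero _
  have hfy : f ((0 : Kst k K σ), y) = (0, toKst k K τ (fromKst k K τ y * τ 1 * d)) := by
    refine (hy (fromKst k K τ y)).trans ?_
    rw [prod_smul]
    refine Prod.ext ?_ ?_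
    · show (fromKst k K τ y ⊗ₜ[k] (1:K) : K ⊗[k] K) • (f e2).1 = (0 : Kst k K σ)
      rw [hd1]
      exact smul_zero _
    · show (fromKst k K τ y ⊗ₜ[k] (1:K) : K ⊗[k] K) • (f e2).2 = _
      rw [show ((f e2).2 : Kst k K τ) = toKst k K τ d from rfl, Kst_smul_toKst]
  have hfv : f (x, y)
      = (toKst k K σ (fromKst k K σ x * σ 1 * c), toKst k K τ (fromKst k K τ y * τ 1 * d)) := by
    have hsplit : ((x, y) : Kst k K σ × Kst k K τ) = (x, 0) + (0, y) := by
      refine Prod.ext ?_ ?_ <;> simp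
    rw [hsplit, map_add, hfx, hfy]
    refine Prod.ext ?_ ?_ <;> simp
  rw [hfv, Psi_apply]
  refine Prod.ext ?_ ?_
  · show ((Units.mk0 c hcne : K) ⊗ₜ[k] (1:K) : K ⊗[k] K) • toKst k K σ (fromKst k K σ x) = _
    rw [Kst_smul_toKst]
    show toKst k K σ ((Units.mk0 c hcne : K) * σ 1 * fromKst k K σ x)
      = toKst k K σ (fromKst k K σ x * σ 1 * c)
    exact toKst_inj σ (by simp only [Units.val_mk0]; ring)
  · show ((Units.mk0 d hdne : K) ⊗ₜ[k] (1:K) : K ⊗[k] K) • toKst k K τ (fromKst k K τ y) = _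
    rw [Kst_smul_toKst]
    show toKst k K τ ((Units.mk0 d hdne : K) * τ 1 * fromKst k K τ y)
      = toKst k K τ (fromKst k K τ y * τ 1 * d)
    exact toKst_inj τ (by simp only [Units.val_mk0]; ring)


variable (k K)

lemma map_NN (σ τ : K ≃ₐ[k] K) (hστ : σ ≠ τ) :
    (NN k K σ τ).map (MulEquiv.ofBijective (Psi k K σ τ)
      ⟨Psi_injective σ τ, Psi_surjective σ τ hστ⟩ : Kˣ × Kˣ ≃* _)
      = innerAut k K (Kst k K σ × Kst k K τ) := by
  ext f
  simp only [Subgroup.mem_map]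
  constructor
  · rintro ⟨p, ⟨a, b, h1, h2⟩, rfl⟩
    refine ⟨a, b, fun v => ?_⟩
    show Psi k K σ τ p v = (((a : K) ⊗ₜ[k] (b : K)) : K ⊗[k] K) • v
    rw [Psi_apply, prod_smul]
    refine Prod.ext ?_ ?_
    · show ((p.1 : K) ⊗ₜ[k] (1:K) : K ⊗[k] K) • toKst k K σ (fromKst k K σ v.1)
        = ((a : K) ⊗ₜ[k] (b : K) : K ⊗[k] K) • toKst k K σ (fromKst k K σ v.1)
      rw [Kst_smul_toKst, Kst_smul_toKst]
      exact toKst_inj σ (by rw [h1]; simp only [map_one]; ring)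
    · show ((p.2 : K) ⊗ₜ[k] (1:K) : K ⊗[k] K) • toKst k K τ (fromKst k K τ v.2)
        = ((a : K) ⊗ₜ[k] (b : K) : K ⊗[k] K) • toKst k K τ (fromKst k K τ v.2)
      rw [Kst_smul_toKst, Kst_smul_toKst]
      exact toKst_inj τ (by rw [h2]; simp only [map_one]; ring)
  · intro hf
    obtain ⟨a, b, hf⟩ := hf
    set bσ : Kˣ := Units.map σ.toAlgHom.toRingHom.toMonoidHom b with hbσ
    set bτ : Kˣ := Units.map τ.toAlgHom.toRingHom.toMonoidHom b with hbτ
    refine ⟨(a * bσ, a * bτ), ⟨a, b, rfl, rfl⟩, ?_⟩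
    apply LinearEquiv.ext
    intro v
    show Psi k K σ τ (a * bσ, a * bτ) v = f v
    rw [hf v, Psi_apply, prod_smul]
    refine Prod.ext ?_ ?_
    · show (((a * bσ : Kˣ) : K) ⊗ₜ[k] (1:K) : K ⊗[k] K) • toKst k K σ (fromKst k K σ v.1)
        = ((a : K) ⊗ₜ[k] (b : K) : K ⊗[k] K) • toKst k K σ (fromKst k K σ v.1)
      rw [Kst_smul_toKst, Kst_smul_toKst]
      refine toKst_inj σ ?_
      show (a : K) * σ b * σ 1 * fromKst k K σ v.1 = (a : K) * σ (b : K) * fromKst k K σ v.1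
      simp only [map_one, mul_one]
    · show (((a * bτ : Kˣ) : K) ⊗ₜ[k] (1:K) : K ⊗[k] K) • toKst k K τ (fromKst k K τ v.2)
        = ((a : K) ⊗ₜ[k] (b : K) : K ⊗[k] K) • toKst k K τ (fromKst k K τ v.2)
      rw [Kst_smul_toKst, Kst_smul_toKst]
      refine toKst_inj τ ?_
      show (a : K) * τ b * τ 1 * fromKst k K τ v.2 = (a : K) * τ (b : K) * fromKst k K τ v.2
      simp only [map_one, mul_one]


variable [PerfectField k] [FiniteDimensional k K]

/-- Assume `char k ≠ 2`.  For `σ ≠ τ` in `Gal(K/k)` and `V := K_σ ⊕ K_τ`,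
the group `Aut V` is isomorphic to `(Kˣ × Kˣ)/N` where `N = {(a σ(b), a τ(b)) : a, b ∈ Kˣ}`. -/
theorem autV_eq_units_quot (hchar : ringChar k ≠ 2) (σ τ : K ≃ₐ[k] K) (hστ : σ ≠ τ) :
    Nonempty
      ((((Kst k K σ × Kst k K τ) ≃ₗ[K ⊗[k] K] (Kst k K σ × Kst k K τ)) ⧸
          innerAut k K (Kst k K σ × Kst k K τ)) ≃*
        ((Kˣ × Kˣ) ⧸ NN k K σ τ)) := by
  exact ⟨(QuotientGroup.congr (NN k K σ τ) (innerAut k K (Kst k K σ × Kst k K τ))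
    (MulEquiv.ofBijective (Psi k K σ τ) ⟨Psi_injective σ τ, Psi_surjective σ τ hστ⟩)
    (map_NN k K σ τ hστ)).symm⟩
end
end

section
/- Let λ ∈ Emb(K), let δ, ε ∈ Gal(K/k), and let δ̄ be a k-algebra automorphism of K̄ extending δ such that δ̄⁻¹ ∘ λ ∘ ε = λ (as maps K → K̄). Then δ̄(K(λ)) = K(λ), so that δ̄ restricts to a k-algebra automorphism of the field K(λ); moreover, if δ̄' is any other k-algebra automorphism of K̄ extending δ with (δ̄')⁻¹ ∘ λ ∘ ε = λ, then δ̄'|_{K(λ)} = δ̄|_{K(λ)}. -/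
open TensorProduct

noncomputable section

variable (k K : Type*) [Field k] [Field K] [Algebra k K]

/-- The compositum `K(λ)` of `K` and `λ(K)` inside the algebraic closure of `K`. -/
def Klam (lam : K →ₐ[k] AlgebraicClosure K) : IntermediateField K (AlgebraicClosure K) :=
  IntermediateField.adjoin K (Set.range lam)

variable [PerfectField k] [FiniteDimensional k K]

/-- Let `λ ∈ Emb(K)`, `δ, ε ∈ Gal(K/k)`, and let `δ̄` be a `k`-algebra
automorphism of `K̄` extending `δ` with `δ̄⁻¹ ∘ λ ∘ ε = λ`.  Then `δ̄(K(λ)) = K(λ)`, so `δ̄`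
restricts to a `k`-algebra automorphism of the field `K(λ)`; moreover any other extension `δ̄'`
of `δ` with `(δ̄')⁻¹ ∘ λ ∘ ε = λ` agrees with `δ̄` on `K(λ)`. -/
theorem extension_preserves_Klam
    (lam : K →ₐ[k] AlgebraicClosure K) (δ ε : K ≃ₐ[k] K)
    (δbar : AlgebraicClosure K ≃ₐ[k] AlgebraicClosure K)
    (hext : ∀ x : K, δbar (algebraMap K (AlgebraicClosure K) x) =
      algebraMap K (AlgebraicClosure K) (δ x))
    (hfix : ∀ x : K, δbar.symm (lam (ε x)) = lam x) :
    (⇑δbar '' (Klam k K lam : Set (AlgebraicClosure K)) =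
      (Klam k K lam : Set (AlgebraicClosure K))) ∧
    ∀ δbar' : AlgebraicClosure K ≃ₐ[k] AlgebraicClosure K,
      (∀ x : K, δbar' (algebraMap K (AlgebraicClosure K) x) =
        algebraMap K (AlgebraicClosure K) (δ x)) →
      (∀ x : K, δbar'.symm (lam (ε x)) = lam x) →
      ∀ y ∈ Klam k K lam, δbar' y = δbar y := by
  -- forward versions of the fixing hypothesis
  have hδ : ∀ x : K, δbar (lam x) = lam (ε x) := fun x => by
    rw [← hfix x]; exact δbar.apply_symm_apply _
  have hδs : ∀ x : K, δbar.symm (lam x) = lam (ε.symm x) := fun x => by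
    have h := hfix (ε.symm x); rwa [ε.apply_symm_apply] at h
  have hexts : ∀ x : K, δbar.symm (algebraMap K (AlgebraicClosure K) x) =
      algebraMap K (AlgebraicClosure K) (δ.symm x) := fun x => by
    have h := hext (δ.symm x)
    rw [δ.apply_symm_apply] at h
    rw [← h, δbar.symm_apply_apply]
  -- any automorphism sending `K` to `K` and `λ(K)` to `λ(K)` preserves `K(λ)`
  have key : ∀ (σ : AlgebraicClosure K ≃ₐ[k] AlgebraicClosure K) (δ' ε' : K ≃ₐ[k] K),
      (∀ x : K, σ (algebraMap K (AlgebraicClosure K) x) =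
        algebraMap K (AlgebraicClosure K) (δ' x)) →
      (∀ x : K, σ (lam x) = lam (ε' x)) →
      ∀ y ∈ Klam k K lam, σ y ∈ Klam k K lam := by
    intro σ δ' ε' h1 h2 y hy
    induction hy using IntermediateField.adjoin_induction with
    | mem x hx =>
      obtain ⟨a, rfl⟩ := hx
      rw [h2]
      exact IntermediateField.subset_adjoin _ _ ⟨ε' a, rfl⟩
    | algebraMap x =>
      rw [h1]
      exact (Klam k K lam).algebraMap_mem _
    | add x y hx hy px py => rw [map_add]; exact add_mem px py
    | inv x hx px => rw [map_inv₀]; exact inv_mem px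
    | mul x y hx hy px py => rw [map_mul]; exact mul_mem px py
  constructor
  · apply Set.eq_of_subset_of_subset
    · rintro _ ⟨y, hy, rfl⟩
      exact key δbar δ ε hext hδ y hy
    · intro y hy
      exact ⟨δbar.symm y, key δbar.symm δ.symm ε.symm hexts hδs y hy,
        δbar.apply_symm_apply y⟩
  · intro δbar' h1 h2 y hy
    have hδ' : ∀ x : K, δbar' (lam x) = lam (ε x) := fun x => by
      rw [← h2 x]; exact δbar'.apply_symm_apply _
    induction hy using IntermediateField.adjoin_induction with
    | mem x hx =>
      obtain ⟨a, rfl⟩ := hx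
      rw [hδ', hδ]
    | algebraMap x => rw [h1, hext]
    | add x y hx hy px py => rw [map_add, map_add, px, py]
    | inv x hx px => rw [map_inv₀, map_inv₀, px]
    | mul x y hx hy px py => rw [map_mul, map_mul, px, py]
end
end

section
/- Let C be a (not necessarily commutative) ring that is a domain and in which the set of nonzero elements satisfies both the left and the right Ore condition, and let Q be the associated division ring of fractions of C (the left, equivalently right, Ore localization of C at its nonzero elements). Then for every l ≥ 1 and every finite list x₁, …, x_n of elements of the right C-module Q^{⊕l}, the right C-submodule of Q^{⊕l} generated by x₁, …, x_n is contained in a right C-submodule of Q^{⊕l} that is free of finite rank. -/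
noncomputable section

variable (C Q : Type*) [Ring C] [DivisionRing Q]

/-- `Q` regarded as a right `C`-module (i.e. a `Cᵐᵒᵖ`-module) via a ring map `f : C →+* Q`,
with action `q • c = q * f c`. -/
def RightMod (f : C →+* Q) : Type _ := Q

instance (f : C →+* Q) : AddCommGroup (RightMod C Q f) := inferInstanceAs (AddCommGroup Q)

instance (f : C →+* Q) : Module Cᵐᵒᵖ (RightMod C Q f) :=
  Module.compHom Q (RingHom.op f)

/-- Identification of `RightMod C Q f` with `Q` (they are definitionally equal). -/
def toQ (f : C →+* Q) : RightMod C Q f → Q := fun q => q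

lemma toQ_smul (f : C →+* Q) (c : C) (q : RightMod C Q f) :
    toQ C Q f (MulOpposite.op c • q) = toQ C Q f q * f c := rfl

lemma toQ_add (f : C →+* Q) (a b : RightMod C Q f) :
    toQ C Q f (a + b) = toQ C Q f a + toQ C Q f b := rfl

lemma toQ_zero (f : C →+* Q) : toQ C Q f (0 : RightMod C Q f) = 0 := rfl

/-- Common left denominator for a finite list of elements of `Q`. -/
lemma common_left_denom [IsDomain C] (f : C →+* Q) (hinj : Function.Injective f)
    (hleftOre : ∀ a s : C, s ≠ 0 → ∃ b t : C, t ≠ 0 ∧ t * a = b * s)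
    (hfrac_left : ∀ q : Q, ∃ c s : C, s ≠ 0 ∧ q = (f s)⁻¹ * f c)
    (L : List Q) : ∃ s : C, s ≠ 0 ∧ ∀ q ∈ L, ∃ c, f s * q = f c := by
  induction L with
  | nil => exact ⟨1, one_ne_zero, by simp⟩
  | cons q L ih =>
    obtain ⟨s, hs, hL⟩ := ih
    obtain ⟨c0, t, ht, hq⟩ := hfrac_left q
    obtain ⟨b, u, hu, hut⟩ := hleftOre t s hs
    have hft : f t ≠ 0 := fun h => ht (hinj (by rw [h, map_zero]))
    refine ⟨u * t, mul_ne_zero hu ht, ?_⟩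
    intro q' hq'
    rcases List.mem_cons.mp hq' with h | h
    · refine ⟨u * c0, ?_⟩
      rw [h, hq, map_mul, map_mul, mul_assoc, ← mul_assoc (f t),
        mul_inv_cancel₀ hft, one_mul]
    · obtain ⟨c, hc⟩ := hL q' h
      exact ⟨b * c, by rw [hut, map_mul, mul_assoc, hc, ← map_mul]⟩

/-- Let `C` be a (not necessarily commutative) domain whose nonzero elements
satisfy the left and right Ore conditions, and let `Q` be the associated division ring of
fractions (a division ring containing `C` in which every element has the form `s⁻¹ c` and the
form `c' t'⁻¹`).  Then for every `l ≥ 1`, any finitely many elements `x₁, …, xₙ` of the right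
`C`-module `Q^l` generate a right `C`-submodule contained in a free right `C`-submodule of
finite rank. -/
theorem fg_submodule_of_fractions_le_free
    [IsDomain C] (f : C →+* Q) (hinj : Function.Injective f)
    (hleftOre : ∀ a s : C, s ≠ 0 → ∃ b t : C, t ≠ 0 ∧ t * a = b * s)
    (hrightOre : ∀ a s : C, s ≠ 0 → ∃ b t : C, t ≠ 0 ∧ a * t = s * b)
    (hfrac_left : ∀ q : Q, ∃ c s : C, s ≠ 0 ∧ q = (f s)⁻¹ * f c)
    (hfrac_right : ∀ q : Q, ∃ c t : C, t ≠ 0 ∧ q = f c * (f t)⁻¹)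
    (l : ℕ) (hl : 1 ≤ l) (n : ℕ) (x : Fin n → (Fin l → RightMod C Q f)) :
    ∃ P : Submodule Cᵐᵒᵖ (Fin l → RightMod C Q f),
      Submodule.span Cᵐᵒᵖ (Set.range x) ≤ P ∧
      ∃ m : ℕ, Nonempty (P ≃ₗ[Cᵐᵒᵖ] (Fin m → Cᵐᵒᵖ)) := by
  classical
  set L : List Q :=
    (List.finRange n).flatMap (fun i => List.ofFn (fun j => toQ C Q f (x i j))) with hLdef
  obtain ⟨s, hs, hL⟩ := common_left_denom C Q f hinj hleftOre hfrac_left L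
  have hfs : f s ≠ 0 := fun h => hs (hinj (by rw [h, map_zero]))
  -- the free submodule
  set P : Submodule Cᵐᵒᵖ (Fin l → RightMod C Q f) :=
    { carrier := {v | ∀ j, ∃ c : C, f s * toQ C Q f (v j) = f c}
      zero_mem' := fun j => ⟨0, by simp [toQ_zero]⟩
      add_mem' := by
        intro a b ha hb j
        obtain ⟨c, hc⟩ := ha j
        obtain ⟨d, hd⟩ := hb j
        exact ⟨c + d, by
          show f s * toQ C Q f (a j + b j) = f (c + d)
          rw [toQ_add, mul_add, hc, hd, map_add]⟩
      smul_mem' := by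
        rintro ⟨c⟩ v hv j
        obtain ⟨d, hd⟩ := hv j
        exact ⟨d * c, by
          show f s * toQ C Q f (MulOpposite.op c • v j) = f (d * c)
          rw [toQ_smul, ← mul_assoc, hd, ← map_mul]⟩ } with hPdef
  have hmemL : ∀ i j, toQ C Q f (x i j) ∈ L := by
    intro i j
    rw [hLdef, List.mem_flatMap]
    exact ⟨i, List.mem_finRange i, by
      rw [List.mem_ofFn]; exact ⟨j, rfl⟩⟩
  refine ⟨P, ?_, l, ?_⟩
  · rw [Submodule.span_le]
    rintro _ ⟨i, rfl⟩ j
    exact hL _ (hmemL i j)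
  · -- the linear map C^l → Q^l, w ↦ (f s)⁻¹ * f (w j)
    have hsmul : ∀ (c : Cᵐᵒᵖ) (w : Fin l → Cᵐᵒᵖ) (j : Fin l),
        ((c • w) j).unop = (w j).unop * c.unop := fun c w j => rfl
    set φ : (Fin l → Cᵐᵒᵖ) →ₗ[Cᵐᵒᵖ] (Fin l → RightMod C Q f) :=
      { toFun := fun w j => ((f s)⁻¹ * f (w j).unop : Q)
        map_add' := by
          intro a b
          funext j
          show ((f s)⁻¹ * f ((a j).unop + (b j).unop) : Q) = _
          rw [map_add, mul_add]
          rfl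
        map_smul' := by
          intro c w
          funext j
          show ((f s)⁻¹ * f ((w j).unop * c.unop) : Q) = _
          rw [map_mul, ← mul_assoc]
          rfl } with hφdef
    have hφP : ∀ w, φ w ∈ P := by
      intro w j
      refine ⟨(w j).unop, ?_⟩
      show f s * ((f s)⁻¹ * f (w j).unop) = f (w j).unop
      rw [← mul_assoc, mul_inv_cancel₀ hfs, one_mul]
    set φ' : (Fin l → Cᵐᵒᵖ) →ₗ[Cᵐᵒᵖ] P := φ.codRestrict P hφP with hφ'def
    have hbij : Function.Bijective φ' := by
      constructor
      · intro a b hab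
        have hab' : φ a = φ b := congrArg Subtype.val hab
        funext j
        have : ((f s)⁻¹ * f (a j).unop : Q) = (f s)⁻¹ * f (b j).unop :=
          congrFun hab' j
        have h2 : f (a j).unop = f (b j).unop := by
          have := congrArg (fun q => f s * q) this
          simpa [← mul_assoc, mul_inv_cancel₀ hfs] using this
        exact MulOpposite.unop_injective (hinj h2)
      · rintro ⟨v, hv⟩
        choose c hc using fun j => hv j
        refine ⟨fun j => MulOpposite.op (c j), ?_⟩
        apply Subtype.ext
        funext j
        show ((f s)⁻¹ * f (c j) : Q) = toQ C Q f (v j)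
        rw [← hc j, ← mul_assoc, inv_mul_cancel₀ hfs, one_mul]
    exact ⟨(LinearEquiv.ofBijective φ' hbij).symm⟩
end
end

section
/- Assume char k ≠ 2. Let σ, τ ∈ Gal(K/k) with σ ≠ τ. Let N be the subgroup {(a σ(b), a τ(b)) : a, b ∈ K^×} of K^× × K^×, let A := (K^× × K^×)/N, and let S := {(δ, ε) ∈ Gal(K/k)² : {δ⁻¹σε, δ⁻¹τε} = {σ, τ}}, a subgroup of Gal(K/k)². Then the assignment θ sending (δ, ε) ∈ S to the map A → A given on classes by [(c, d)] ↦ [(δ⁻¹(c), δ⁻¹(d))] if δ⁻¹σε = σ, and by [(c, d)] ↦ [(δ⁻¹(d), δ⁻¹(c))] if δ⁻¹σε = τ, is well defined (each θ(δ, ε) is a group automorphism of A), and θ is a group homomorphism from the opposite group S^op to Aut(A). -/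
noncomputable section

variable (k K : Type*) [Field k] [Field K] [Algebra k K]

/-- The subgroup `S = {(δ, ε) : {δ⁻¹σε, δ⁻¹τε} = {σ, τ}}` of `Gal(K/k)²` (for `σ ≠ τ` the
displayed set equality is equivalent to the disjunction used here). -/
def Sgrp (σ τ : K ≃ₐ[k] K) : Subgroup ((K ≃ₐ[k] K) × (K ≃ₐ[k] K)) where
  carrier := {p | (p.1⁻¹ * σ * p.2 = σ ∧ p.1⁻¹ * τ * p.2 = τ) ∨
    (p.1⁻¹ * σ * p.2 = τ ∧ p.1⁻¹ * τ * p.2 = σ)}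
  one_mem' := Or.inl ⟨by simp, by simp⟩
  mul_mem' := by
    rintro p q (⟨h1, h2⟩ | ⟨h1, h2⟩) (⟨h3, h4⟩ | ⟨h3, h4⟩)
    all_goals
      have e1 : (p * q).1⁻¹ * σ * (p * q).2 = q.1⁻¹ * (p.1⁻¹ * σ * p.2) * q.2 := by
        show (p.1 * q.1)⁻¹ * σ * (p.2 * q.2) = _
        group
      have e2 : (p * q).1⁻¹ * τ * (p * q).2 = q.1⁻¹ * (p.1⁻¹ * τ * p.2) * q.2 := by
        show (p.1 * q.1)⁻¹ * τ * (p.2 * q.2) = _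
        group
    · exact Or.inl ⟨by rw [e1, h1, h3], by rw [e2, h2, h4]⟩
    · exact Or.inr ⟨by rw [e1, h1, h3], by rw [e2, h2, h4]⟩
    · exact Or.inr ⟨by rw [e1, h1, h4], by rw [e2, h2, h3]⟩
    · exact Or.inl ⟨by rw [e1, h1, h4], by rw [e2, h2, h3]⟩
  inv_mem' := by
    rintro p (⟨h1, h2⟩ | ⟨h1, h2⟩)
    · refine Or.inl ⟨?_, ?_⟩
      · show p.1 * σ * p.2⁻¹ = σ
        conv_lhs => rw [← h1]
        group
      · show p.1 * τ * p.2⁻¹ = τ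
        conv_lhs => rw [← h2]
        group
    · refine Or.inr ⟨?_, ?_⟩
      · show p.1 * σ * p.2⁻¹ = τ
        conv_lhs => rw [← h2]
        group
      · show p.1 * τ * p.2⁻¹ = σ
        conv_lhs => rw [← h1]
        group

/-- The action of `δ ∈ Gal(K/k)` on units of `K`. -/
def umap (δ : K ≃ₐ[k] K) : Kˣ →* Kˣ :=
  Units.map δ.toAlgHom.toRingHom.toMonoidHom

variable [PerfectField k] [FiniteDimensional k K]


namespace Statement19Aux

variable {k K : Type*} [Field k] [Field K] [Algebra k K]

lemma umap_mul_apply (δ ε : K ≃ₐ[k] K) (u : Kˣ) :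
    umap k K (δ * ε) u = umap k K δ (umap k K ε u) := by
  ext; rfl

lemma key {δ ε ρ ρ' : K ≃ₐ[k] K} (h : δ⁻¹ * ρ * ε = ρ') (x : K) :
    δ⁻¹ (ρ x) = ρ' (ε⁻¹ x) := by
  have h2 : δ⁻¹ * ρ = ρ' * ε⁻¹ := by rw [← h]; group
  have := DFunLike.congr_fun (congrArg (fun e : K ≃ₐ[k] K => e.toEquiv) h2) x
  simpa [AlgEquiv.mul_apply] using this

open Classical in
/-- The raw map on `Kˣ × Kˣ` attached to a pair `p = (δ, ε)`. -/
noncomputable def rawmap (σ : K ≃ₐ[k] K) (p : (K ≃ₐ[k] K) × (K ≃ₐ[k] K)) :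
    (Kˣ × Kˣ) →* (Kˣ × Kˣ) :=
  if p.1⁻¹ * σ * p.2 = σ then (umap k K p.1⁻¹).prodMap (umap k K p.1⁻¹)
  else ((umap k K p.1⁻¹).prodMap (umap k K p.1⁻¹)).comp
    (MulEquiv.prodComm : Kˣ × Kˣ ≃* Kˣ × Kˣ).toMonoidHom

lemma rawmap_pos (σ : K ≃ₐ[k] K) {p : (K ≃ₐ[k] K) × (K ≃ₐ[k] K)}
    (h : p.1⁻¹ * σ * p.2 = σ) (x : Kˣ × Kˣ) :
    rawmap σ p x = (umap k K p.1⁻¹ x.1, umap k K p.1⁻¹ x.2) := by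
  rw [rawmap, if_pos h]; rfl

lemma rawmap_neg (σ : K ≃ₐ[k] K) {p : (K ≃ₐ[k] K) × (K ≃ₐ[k] K)}
    (h : ¬ (p.1⁻¹ * σ * p.2 = σ)) (x : Kˣ × Kˣ) :
    rawmap σ p x = (umap k K p.1⁻¹ x.2, umap k K p.1⁻¹ x.1) := by
  rw [rawmap, if_neg h]; rfl

variable {σ τ : K ≃ₐ[k] K}

lemma ne_of_eq_tau (hστ : σ ≠ τ) {e : K ≃ₐ[k] K} (h : e = τ) : ¬ (e = σ) :=
  fun h2 => hστ ((h2.symm.trans h))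

lemma rawmap_mem (hστ : σ ≠ τ) {p : (K ≃ₐ[k] K) × (K ≃ₐ[k] K)} (hp : p ∈ Sgrp k K σ τ)
    {x : Kˣ × Kˣ} (hx : x ∈ NN k K σ τ) : rawmap σ p x ∈ NN k K σ τ := by
  obtain ⟨a, b, h1, h2⟩ := hx
  rcases hp with ⟨hσ, hτ⟩ | ⟨hσ, hτ⟩
  · rw [rawmap_pos σ hσ]
    refine ⟨umap k K p.1⁻¹ a, umap k K p.2⁻¹ b, ?_, ?_⟩
    · show (p.1⁻¹ (x.1 : K)) = p.1⁻¹ (a : K) * σ (p.2⁻¹ (b : K))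
      rw [h1, map_mul, key hσ]
    · show (p.1⁻¹ (x.2 : K)) = p.1⁻¹ (a : K) * τ (p.2⁻¹ (b : K))
      rw [h2, map_mul, key hτ]
  · rw [rawmap_neg σ (ne_of_eq_tau hστ hσ)]
    refine ⟨umap k K p.1⁻¹ a, umap k K p.2⁻¹ b, ?_, ?_⟩
    · show (p.1⁻¹ (x.2 : K)) = p.1⁻¹ (a : K) * σ (p.2⁻¹ (b : K))
      rw [h2, map_mul, key hτ]
    · show (p.1⁻¹ (x.1 : K)) = p.1⁻¹ (a : K) * τ (p.2⁻¹ (b : K))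
      rw [h1, map_mul, key hσ]

lemma prodmul_cond (ρ : K ≃ₐ[k] K) (p q : (K ≃ₐ[k] K) × (K ≃ₐ[k] K)) :
    (p * q).1⁻¹ * ρ * (p * q).2 = q.1⁻¹ * (p.1⁻¹ * ρ * p.2) * q.2 := by
  show (p.1 * q.1)⁻¹ * ρ * (p.2 * q.2) = _
  group

lemma rawmap_comp (hστ : σ ≠ τ) {p q : (K ≃ₐ[k] K) × (K ≃ₐ[k] K)}
    (hp : p ∈ Sgrp k K σ τ) (hq : q ∈ Sgrp k K σ τ) (x : Kˣ × Kˣ) :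
    rawmap σ (p * q) x = rawmap σ q (rawmap σ p x) := by
  have hinv : ∀ u : Kˣ, umap k K (p * q).1⁻¹ u = umap k K q.1⁻¹ (umap k K p.1⁻¹ u) := by
    intro u
    have : (p * q).1⁻¹ = q.1⁻¹ * p.1⁻¹ := mul_inv_rev p.1 q.1
    rw [this, umap_mul_apply]
  rcases hp with ⟨hp1, hp2⟩ | ⟨hp1, hp2⟩ <;> rcases hq with ⟨hq1, hq2⟩ | ⟨hq1, hq2⟩
  · have hpq : (p * q).1⁻¹ * σ * (p * q).2 = σ := by rw [prodmul_cond, hp1, hq1]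
    rw [rawmap_pos σ hpq, rawmap_pos σ hp1, rawmap_pos σ hq1, hinv, hinv]
  · have hpq : (p * q).1⁻¹ * σ * (p * q).2 = τ := by rw [prodmul_cond, hp1, hq1]
    rw [rawmap_neg σ (ne_of_eq_tau hστ hpq), rawmap_pos σ hp1,
      rawmap_neg σ (ne_of_eq_tau hστ hq1), hinv, hinv]
  · have hpq : (p * q).1⁻¹ * σ * (p * q).2 = τ := by rw [prodmul_cond, hp1, hq2]
    rw [rawmap_neg σ (ne_of_eq_tau hστ hpq), rawmap_neg σ (ne_of_eq_tau hστ hp1),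
      rawmap_pos σ hq1, hinv, hinv]
  · have hpq : (p * q).1⁻¹ * σ * (p * q).2 = σ := by rw [prodmul_cond, hp1, hq2]
    rw [rawmap_pos σ hpq, rawmap_neg σ (ne_of_eq_tau hστ hp1),
      rawmap_neg σ (ne_of_eq_tau hστ hq1), hinv, hinv]

lemma rawmap_one (σ : K ≃ₐ[k] K) (x : Kˣ × Kˣ) : rawmap σ (1 : _ × _) x = x := by
  rw [rawmap_pos σ (by simp) x]
  ext <;> simp [umap]

/-- The induced map on the quotient. -/
noncomputable def phimap (hστ : σ ≠ τ) (p : ↥(Sgrp k K σ τ)) :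
    ((Kˣ × Kˣ) ⧸ NN k K σ τ) →* ((Kˣ × Kˣ) ⧸ NN k K σ τ) :=
  QuotientGroup.map _ _ (rawmap σ (p : (K ≃ₐ[k] K) × (K ≃ₐ[k] K)))
    (fun x hx => rawmap_mem hστ p.2 hx)

lemma phimap_mk (hστ : σ ≠ τ) (p : ↥(Sgrp k K σ τ)) (x : Kˣ × Kˣ) :
    phimap hστ p (QuotientGroup.mk x) =
      QuotientGroup.mk (rawmap σ (p : (K ≃ₐ[k] K) × (K ≃ₐ[k] K)) x) := rfl

lemma phimap_comp (hστ : σ ≠ τ) (p q : ↥(Sgrp k K σ τ)) (a : (Kˣ × Kˣ) ⧸ NN k K σ τ) :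
    phimap hστ (p * q) a = phimap hστ q (phimap hστ p a) := by
  induction a using QuotientGroup.induction_on with
  | H x =>
    rw [phimap_mk, phimap_mk, phimap_mk]
    exact congrArg QuotientGroup.mk (rawmap_comp hστ p.2 q.2 x)

lemma phimap_one (hστ : σ ≠ τ) (a : (Kˣ × Kˣ) ⧸ NN k K σ τ) :
    phimap hστ (1 : ↥(Sgrp k K σ τ)) a = a := by
  induction a using QuotientGroup.induction_on with
  | H x =>
    rw [phimap_mk]
    exact congrArg QuotientGroup.mk (rawmap_one σ x)

/-- The automorphism of the quotient attached to `p ∈ S`. -/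
noncomputable def thetamap (hστ : σ ≠ τ) (p : ↥(Sgrp k K σ τ)) :
    MulAut ((Kˣ × Kˣ) ⧸ NN k K σ τ) where
  toFun := phimap hστ p
  invFun := phimap hστ p⁻¹
  left_inv := fun a => by rw [← phimap_comp, mul_inv_cancel, phimap_one]
  right_inv := fun a => by rw [← phimap_comp, inv_mul_cancel, phimap_one]
  map_mul' := map_mul _

/-- `θ` as a monoid hom from `Sᵒᵖ` to `Aut A`. -/
noncomputable def theta (hστ : σ ≠ τ) :
    (↥(Sgrp k K σ τ))ᵐᵒᵖ →* MulAut ((Kˣ × Kˣ) ⧸ NN k K σ τ) where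
  toFun := fun p => thetamap hστ p.unop
  map_one' := by
    ext a
    exact phimap_one hστ a
  map_mul' := fun p q => by
    ext a
    show phimap hστ (q.unop * p.unop) a = phimap hστ p.unop (phimap hστ q.unop a)
    exact phimap_comp hστ _ _ a

end Statement19Aux

/-- Assume `char k ≠ 2`.  Let `σ ≠ τ` in `Gal(K/k)`, let
`N = {(a σ(b), a τ(b))} ≤ Kˣ × Kˣ`, `A := (Kˣ × Kˣ)/N`, and let `S ≤ Gal(K/k)²` be the
subgroup of pairs `(δ, ε)` with `{δ⁻¹σε, δ⁻¹τε} = {σ, τ}`.  Then the assignment sending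
`(δ, ε) ∈ S` to the map `A → A` given by `[(c, d)] ↦ [(δ⁻¹ c, δ⁻¹ d)]` if `δ⁻¹σε = σ` and by
`[(c, d)] ↦ [(δ⁻¹ d, δ⁻¹ c)]` if `δ⁻¹σε = τ` is well defined and defines a group homomorphism
`θ : Sᵒᵖ →* Aut A`. -/
theorem theta_group_hom (hchar : ringChar k ≠ 2) (σ τ : K ≃ₐ[k] K) (hστ : σ ≠ τ) :
    ∃ θ : (↥(Sgrp k K σ τ))ᵐᵒᵖ →* MulAut ((Kˣ × Kˣ) ⧸ NN k K σ τ),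
      ∀ (p : ↥(Sgrp k K σ τ)) (c d : Kˣ),
        ((p : (K ≃ₐ[k] K) × (K ≃ₐ[k] K)).1⁻¹ * σ * (p : (K ≃ₐ[k] K) × (K ≃ₐ[k] K)).2 = σ →
          θ (MulOpposite.op p) (QuotientGroup.mk (c, d)) =
            QuotientGroup.mk (umap k K (p : (K ≃ₐ[k] K) × (K ≃ₐ[k] K)).1⁻¹ c,
              umap k K (p : (K ≃ₐ[k] K) × (K ≃ₐ[k] K)).1⁻¹ d)) ∧
        ((p : (K ≃ₐ[k] K) × (K ≃ₐ[k] K)).1⁻¹ * σ * (p : (K ≃ₐ[k] K) × (K ≃ₐ[k] K)).2 = τ →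
          θ (MulOpposite.op p) (QuotientGroup.mk (c, d)) =
            QuotientGroup.mk (umap k K (p : (K ≃ₐ[k] K) × (K ≃ₐ[k] K)).1⁻¹ d,
              umap k K (p : (K ≃ₐ[k] K) × (K ≃ₐ[k] K)).1⁻¹ c)) := by
  refine ⟨Statement19Aux.theta hστ, fun p c d => ⟨fun h => ?_, fun h => ?_⟩⟩
  · have e : (Statement19Aux.theta hστ) (MulOpposite.op p) (QuotientGroup.mk (c, d)) =
        Statement19Aux.phimap hστ p (QuotientGroup.mk (c, d)) := rfl
    rw [e, Statement19Aux.phimap_mk, Statement19Aux.rawmap_pos σ h]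
  · have e : (Statement19Aux.theta hστ) (MulOpposite.op p) (QuotientGroup.mk (c, d)) =
        Statement19Aux.phimap hστ p (QuotientGroup.mk (c, d)) := rfl
    rw [e, Statement19Aux.phimap_mk, Statement19Aux.rawmap_neg σ (Statement19Aux.ne_of_eq_tau hστ h)]
end
end
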